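/- MMV uniqueness (sufficiency): if X ∈ ℝ^{N×L} has row support Ω with |Ω| < (spark(Φ) − 1 + rank(X))/2, then X is the unique matrix with at most |Ω| nonzero rows satisfying Y = ΦX. -/

import Mathlib

open Matrix Finset

/-- The spark of a matrix: the smallest number of columns that are linearly
dependent (`⊤` if the columns are linearly independent). -/
noncomputable def spark {M N : ℕ} (Φ : Matrix (Fin M) (Fin N) ℝ) : ℕ∞ :=
  sInf {k : ℕ∞ | ∃ s : Finset (Fin N), (s.card : ℕ∞) = k ∧
    ¬ LinearIndependent ℝ (fun i : s => Φ.transpose i.1)}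

open Classical in
/-- The row support of a matrix: the set of indices of its not-identically-zero
rows. -/
noncomputable def rowSupport {N L : ℕ} (X : Matrix (Fin N) (Fin L) ℝ) : Finset (Fin N) :=
  Finset.univ.filter fun i => ∃ j, X i j ≠ 0

lemma row_eq_zero_of_not_mem_rowSupport {N L : ℕ} {A : Matrix (Fin N) (Fin L) ℝ}
    {i : Fin N} (h : i ∉ rowSupport A) : ∀ j, A i j = 0 := by
  classical
  intro j
  by_contra hj
  exact h (Finset.mem_filter.2 ⟨Finset.mem_univ i, ⟨j, hj⟩⟩)

lemma rank_le_rowSupport_card {N L : ℕ} (A : Matrix (Fin N) (Fin L) ℝ) :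
    A.rank ≤ (rowSupport A).card := by
  rw [← Matrix.rank_transpose A, Matrix.rank, Matrix.range_mulVecLin]
  change Module.finrank ℝ (Submodule.span ℝ (Set.range A)) ≤ _
  have hle : Submodule.span ℝ (Set.range A) ≤
      Submodule.span ℝ (↑((rowSupport A).image (fun i => A i)) : Set (Fin L → ℝ)) := by
    rw [Submodule.span_le]
    rintro x ⟨i, rfl⟩
    by_cases hi : i ∈ rowSupport A
    · exact Submodule.subset_span (by
        simpa using Finset.mem_image_of_mem (fun i => A i) hi)
    · have : A i = 0 := funext (row_eq_zero_of_not_mem_rowSupport hi)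
      rw [this]
      exact Submodule.zero_mem _
  refine le_trans (Submodule.finrank_mono hle) ?_
  refine le_trans (finrank_span_finset_le_card _) ?_
  exact Finset.card_image_le

lemma matrix_rank_add_le {N L : ℕ} (A B : Matrix (Fin N) (Fin L) ℝ) :
    (A + B).rank ≤ A.rank + B.rank := by
  rw [Matrix.rank, Matrix.rank, Matrix.rank]
  have hle : LinearMap.range (A + B).mulVecLin ≤
      LinearMap.range A.mulVecLin ⊔ LinearMap.range B.mulVecLin := by
    rintro x ⟨c, rfl⟩
    refine Submodule.mem_sup.2 ⟨A.mulVecLin c, ⟨c, rfl⟩, B.mulVecLin c, ⟨c, rfl⟩, ?_⟩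
    simp [Matrix.mulVecLin_apply, Matrix.add_mulVec]
  exact le_trans (Submodule.finrank_mono hle)
    (Submodule.finrank_add_le_finrank_add_finrank _ _)

/-- MMV uniqueness (sufficiency): if
`|supp(X)| < (spark(Φ) − 1 + rank(X))/2`, then `X` is the unique matrix with
at most `|supp(X)|` nonzero rows satisfying `Y = Φ X`. -/
theorem mmv_uniqueness {M N L : ℕ} (Φ : Matrix (Fin M) (Fin N) ℝ)
    (X : Matrix (Fin N) (Fin L) ℝ)
    (h : (2 * (rowSupport X).card : ℕ∞) < spark Φ - 1 + (X.rank : ℕ∞)) :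
    ∀ X' : Matrix (Fin N) (Fin L) ℝ,
      (rowSupport X').card ≤ (rowSupport X).card → Φ * X' = Φ * X → X' = X := by
  classical
  intro X' hcard heq
  by_contra hne
  set Ω := rowSupport X with hΩ
  set Ω' := rowSupport X' with hΩ'
  set Z := X - X' with hZdef
  have hZne : Z ≠ 0 := sub_ne_zero.2 (Ne.symm hne)
  have hΦZ : Φ * Z = 0 := by
    rw [hZdef, Matrix.mul_sub, heq, sub_self]
  set S := rowSupport Z with hS
  have hSsub : S ⊆ Ω ∪ Ω' := by
    intro i hi
    rw [hS, rowSupport, Finset.mem_filter] at hi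
    obtain ⟨-, j, hj⟩ := hi
    by_contra hmem
    rw [Finset.mem_union, not_or] at hmem
    have h1 := row_eq_zero_of_not_mem_rowSupport hmem.1 j
    have h2 := row_eq_zero_of_not_mem_rowSupport hmem.2 j
    apply hj
    simp [hZdef, Matrix.sub_apply, h1, h2]
  set r := Z.rank with hr
  -- rank Z ≥ 1
  have hr1 : 1 ≤ r := by
    have : ∃ i j, Z i j ≠ 0 := by
      by_contra hc
      push_neg at hc
      exact hZne (by ext i j; exact hc i j)
    obtain ⟨i, j, hij⟩ := this
    have hv : (fun i => Z i j) ∈ LinearMap.range Z.mulVecLin := by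
      refine ⟨Pi.single j 1, ?_⟩
      funext i'
      simp [Matrix.mulVecLin_apply, Matrix.mulVec, dotProduct, Pi.single_apply,
        mul_ite, Finset.sum_ite_eq']
    have hpos : 0 < r := by
      rw [hr, Matrix.rank]
      rw [Module.finrank_pos_iff_exists_ne_zero]
      refine ⟨⟨_, hv⟩, ?_⟩
      intro hc
      apply hij
      have := congrFun (congrArg Subtype.val hc) i
      simpa using this
    omega
  have hrS : r ≤ S.card := rank_le_rowSupport_card Z
  -- rank X ≤ r + |Ω ∩ Ω'|
  have hXrank : X.rank ≤ r + (Ω ∩ Ω').card := by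
    set X₁ : Matrix (Fin N) (Fin L) ℝ :=
      Matrix.of fun i j => if i ∈ Ω' then 0 else X i j with hX₁
    set X₂ : Matrix (Fin N) (Fin L) ℝ :=
      Matrix.of fun i j => if i ∈ Ω' then X i j else 0 with hX₂
    have hsplit : X = X₁ + X₂ := by
      ext i j
      by_cases hi : i ∈ Ω' <;> simp [hX₁, hX₂, hi]
    have h1 : X₁.rank ≤ r := by
      have hDZ : X₁ = (Matrix.diagonal fun i => if i ∈ Ω' then (0 : ℝ) else 1) * Z := by
        ext i j
        rw [Matrix.mul_apply]
        by_cases hi : i ∈ Ω'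
        · simp [hX₁, hi, Matrix.diagonal_apply, ite_and]
        · have hx' : X' i j = 0 := row_eq_zero_of_not_mem_rowSupport hi j
          simp [hX₁, hi, Matrix.diagonal_apply, ite_and, hZdef, Matrix.sub_apply, hx']
      rw [hDZ]
      exact Matrix.rank_mul_le_right _ _
    have h2 : X₂.rank ≤ (Ω ∩ Ω').card := by
      refine le_trans (rank_le_rowSupport_card X₂) (Finset.card_le_card ?_)
      intro i hi
      rw [rowSupport, Finset.mem_filter] at hi
      obtain ⟨-, j, hj⟩ := hi
      by_cases hi' : i ∈ Ω'
      · have hx : X i j ≠ 0 := by simpa [hX₂, hi'] using hj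
        exact Finset.mem_inter.2 ⟨Finset.mem_filter.2 ⟨Finset.mem_univ i, ⟨j, hx⟩⟩, hi'⟩
      · exact absurd (by simp [hX₂, hi'] : X₂ i j = 0) hj
    calc X.rank = (X₁ + X₂).rank := by rw [← hsplit]
      _ ≤ X₁.rank + X₂.rank := matrix_rank_add_le _ _
      _ ≤ r + (Ω ∩ Ω').card := add_le_add h1 h2
  -- spark bound: exists dependent set of size ≤ S.card - r + 1
  obtain ⟨T, hTsub, hTcard⟩ := Finset.exists_subset_card_eq
    (le_trans (Nat.sub_le r 1) hrS)
  set V := LinearMap.range Z.mulVecLin with hV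
  have hVsupp : ∀ v ∈ V, ∀ i, i ∉ S → v i = 0 := by
    rintro v ⟨c, rfl⟩ i hi
    have hrow := row_eq_zero_of_not_mem_rowSupport (A := Z) hi
    simp [Matrix.mulVecLin_apply, Matrix.mulVec, dotProduct, hrow]
  have hVker : ∀ v ∈ V, Φ.mulVec v = 0 := by
    rintro v ⟨c, rfl⟩
    rw [Matrix.mulVecLin_apply, Matrix.mulVec_mulVec, hΦZ, Matrix.zero_mulVec]
  have hfinV : Module.finrank ℝ V = r := by rw [hV, hr, Matrix.rank]
  set π : V →ₗ[ℝ] ({i // i ∈ T} → ℝ) :=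
    (LinearMap.funLeft ℝ ℝ (fun t : {i // i ∈ T} => (t : Fin N))).comp V.subtype with hπ
  have hker : LinearMap.ker π ≠ ⊥ := by
    apply LinearMap.ker_ne_bot_of_finrank_lt
    rw [hfinV, Module.finrank_fintype_fun_eq_card]
    simp only [Fintype.card_coe]
    omega
  obtain ⟨⟨w, hwV⟩, hwker, hwne⟩ := Submodule.exists_mem_ne_zero_of_ne_bot hker
  have hwne' : w ≠ 0 := by
    intro hc
    exact hwne (Subtype.ext hc)
  have hwT : ∀ i ∈ T, w i = 0 := by
    intro i hi
    have := congrFun (LinearMap.mem_ker.1 hwker) ⟨i, hi⟩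
    simpa [hπ, LinearMap.funLeft] using this
  set s : Finset (Fin N) := Finset.univ.filter (fun i => w i ≠ 0) with hsdef
  have hssub : s ⊆ S \ T := by
    intro i hi
    rw [hsdef, Finset.mem_filter] at hi
    refine Finset.mem_sdiff.2 ⟨?_, ?_⟩
    · by_contra hc
      exact hi.2 (hVsupp w hwV i hc)
    · intro hc
      exact hi.2 (hwT i hc)
  have hscard : s.card ≤ S.card - r + 1 := by
    have := Finset.card_le_card hssub
    rw [Finset.card_sdiff_of_subset hTsub, hTcard] at this
    omega
  have hdep : ¬ LinearIndependent ℝ (fun i : s => Φ.transpose i.1) := by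
    rw [Fintype.not_linearIndependent_iff]
    refine ⟨fun i => w i.1, ?_, ?_⟩
    · funext j
      have h0 := congrFun (hVker w hwV) j
      rw [Matrix.mulVec] at h0
      simp only [dotProduct] at h0
      rw [Finset.sum_apply]
      have : ∑ i : s, w i.1 * Φ.transpose i.1 j = ∑ i ∈ s, w i * Φ.transpose i j :=
        Finset.sum_attach s (fun i => w i * Φ.transpose i j)
      simp only [Pi.smul_apply, smul_eq_mul]
      rw [this, ← h0]
      rw [eq_comm]
      rw [← Finset.sum_subset (Finset.subset_univ s)]
      · exact Finset.sum_congr rfl fun i _ => mul_comm _ _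
      · intro i _ hi
        rw [hsdef, Finset.mem_filter] at hi
        push_neg at hi
        rw [hi (Finset.mem_univ i), mul_zero]
    · obtain ⟨i₀, hi₀⟩ := Function.ne_iff.1 hwne'
      have hi₀' : i₀ ∈ s := Finset.mem_filter.2 ⟨Finset.mem_univ i₀, by simpa using hi₀⟩
      exact ⟨⟨i₀, hi₀'⟩, by simpa using hi₀⟩
  have hspark : spark Φ ≤ (s.card : ℕ∞) := sInf_le ⟨s, rfl, hdep⟩
  -- final arithmetic
  have hnat : S.card - r + X.rank ≤ 2 * Ω.card := by
    have hcup : (Ω ∪ Ω').card + (Ω ∩ Ω').card = Ω.card + Ω'.card :=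
      Finset.card_union_add_card_inter Ω Ω'
    have hScup : S.card ≤ (Ω ∪ Ω').card := Finset.card_le_card hSsub
    omega
  have h1 : spark Φ ≤ ((S.card - r + 1 : ℕ) : ℕ∞) :=
    hspark.trans (by exact_mod_cast hscard)
  have h2 : spark Φ - 1 ≤ ((S.card - r : ℕ) : ℕ∞) := by
    refine le_trans (tsub_le_tsub_right h1 1) ?_
    rw [show ((1:ℕ∞)) = ((1:ℕ):ℕ∞) from rfl, ← ENat.coe_sub]
    exact_mod_cast Nat.le_of_eq (by omega)
  have h3 : spark Φ - 1 + (X.rank : ℕ∞) ≤ ((S.card - r + X.rank : ℕ) : ℕ∞) := by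
    rw [Nat.cast_add]
    exact add_le_add_left h2 _
  have h4 : ((S.card - r + X.rank : ℕ) : ℕ∞) ≤ ((2 * Ω.card : ℕ) : ℕ∞) := by
    exact_mod_cast hnat
  have h5 : spark Φ - 1 + (X.rank : ℕ∞) ≤ (2 * (rowSupport X).card : ℕ∞) := by
    refine le_trans (h3.trans h4) ?_
    rw [hΩ]
    push_cast
    exact le_refl _
  exact absurd h (not_lt.2 h5)
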